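/- The group with presentation ⟨a, h | a⁻¹ha = h⁻¹, a² = h⟩ (i.e. the presented group on two generators a, h with relator words a⁻¹·h·a·h and a²·h⁻¹) is isomorphic to the cyclic group ℤ/4. -/

import Mathlib

/-- The relators `a⁻¹·h·a·h` and `a²·h⁻¹` in the free group on two
generators `a = of 0` and `h = of 1`. -/
def lensRels : Set (FreeGroup (Fin 2)) :=
  {(FreeGroup.of 0)⁻¹ * FreeGroup.of 1 * FreeGroup.of 0 * FreeGroup.of 1,
    (FreeGroup.of 0) ^ 2 * (FreeGroup.of 1)⁻¹}

namespace LensAux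

abbrev G := PresentedGroup lensRels

def a : G := PresentedGroup.of 0
def h : G := PresentedGroup.of 1

lemma rel_eq_one {r : FreeGroup (Fin 2)} (hr : r ∈ lensRels) :
    (QuotientGroup.mk r : G) = 1 :=
  (QuotientGroup.eq_one_iff _).2 (Subgroup.subset_normalClosure hr)

lemma rel1 : a⁻¹ * h * a * h = 1 := by
  have := rel_eq_one (r := (FreeGroup.of 0)⁻¹ * FreeGroup.of 1 * FreeGroup.of 0 * FreeGroup.of 1)
    (Or.inl rfl)
  exact this

lemma rel2 : a ^ 2 * h⁻¹ = 1 := by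
  have := rel_eq_one (r := (FreeGroup.of 0) ^ 2 * (FreeGroup.of 1)⁻¹) (Or.inr rfl)
  exact this

lemma h_eq : h = a ^ 2 := (mul_inv_eq_one.1 rel2).symm

lemma a_pow_four : a ^ 4 = 1 := by
  have h1 := rel1
  rw [h_eq] at h1
  rw [show (a : G) ^ 4 = a⁻¹ * a ^ 2 * a * a ^ 2 from by group]
  exact h1

/-- The map to `ZMod 4`. -/
def fgen : Fin 2 → Multiplicative (ZMod 4) :=
  ![Multiplicative.ofAdd 1, Multiplicative.ofAdd 2]

lemma frels : ∀ r ∈ lensRels, FreeGroup.lift fgen r = 1 := by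
  intro r hr
  rcases hr with rfl | rfl <;> simp [fgen] <;> decide

def φ : G →* Multiplicative (ZMod 4) := PresentedGroup.toGroup frels

def ψ' : ZMod 4 →+ Additive G :=
  ZMod.lift 4 ⟨zmultiplesHom (Additive G) (Additive.ofMul a), by
    have h4 : ((4 : ℕ) : ℤ) • Additive.ofMul a = 0 := by
      rw [natCast_zsmul]; exact congrArg Additive.ofMul a_pow_four
    simpa [zmultiplesHom] using h4⟩

def ψ : Multiplicative (ZMod 4) →* G := AddMonoidHom.toMultiplicativeLeft ψ'

lemma ψ_int (k : ℤ) : ψ (Multiplicative.ofAdd ((k : ZMod 4))) = a ^ k := by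
  show Additive.toMul (ψ' ((k : ZMod 4))) = a ^ k
  rw [ψ', ZMod.lift_coe]
  simp [zmultiplesHom, ← ofMul_zpow]

lemma φ_a : φ a = Multiplicative.ofAdd 1 := by
  simp [φ, a, fgen]

lemma left_inv : ∀ g : G, ψ (φ g) = g := by
  have : ψ.comp φ = MonoidHom.id G := by
    apply PresentedGroup.ext
    intro x
    fin_cases x
    · show ψ (φ a) = a
      rw [φ_a]
      have := ψ_int 1
      simpa using this
    · show ψ (φ h) = h
      have : φ h = Multiplicative.ofAdd 2 := by simp [φ, h, fgen]
      rw [this, h_eq]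
      simpa using ψ_int 2
  intro g
  exact DFunLike.congr_fun this g

lemma right_inv : ∀ x : Multiplicative (ZMod 4), φ (ψ x) = x := by
  intro x
  obtain ⟨k, hk⟩ := ZMod.intCast_surjective (x.toAdd)
  have hx : x = Multiplicative.ofAdd ((k : ZMod 4)) := by rw [hk, ofAdd_toAdd]
  rw [hx, ψ_int, map_zpow, φ_a]
  rw [← ofAdd_zsmul]
  congr 1
  simp

end LensAux

/-- The group `⟨a, h | a⁻¹ha = h⁻¹, a² = h⟩` is isomorphic to `ℤ/4`. -/
theorem presented_group_is_Z4 :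
    Nonempty (PresentedGroup lensRels ≃* Multiplicative (ZMod 4)) := by
  exact ⟨{ toFun := LensAux.φ, invFun := LensAux.ψ,
           left_inv := LensAux.left_inv, right_inv := LensAux.right_inv,
           map_mul' := map_mul _ }⟩
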